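/- The map sending a superpartition given as a pair (Λ^a; Λ^s), where Λ^a is a strictly decreasing sequence of m nonnegative integers and Λ^s is a partition, to the pair of partitions (Λ*, Λ^⊛) with Λ* = sort(Λ^a ∪ Λ^s) and Λ^⊛ = sort((Λ^a + 1^m) ∪ Λ^s), is a bijection onto the set of pairs of partitions (λ, μ) such that λ ⊆ μ and the skew diagram μ/λ is simultaneously a horizontal strip and a vertical strip (with |μ/λ| = m). -/

import Mathlib

/-- A function `ℕ → ℕ` represents a partition: non-increasing and eventually zero. -/
def IsPartitionFn (f : ℕ → ℕ) : Prop :=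
  (∀ ⦃i j : ℕ⦄, i ≤ j → f j ≤ f i) ∧ ∃ N, ∀ i, N ≤ i → f i = 0

/-- The cell `(i,j)` (0-indexed) belongs to the skew diagram `mu/lam`. -/
def SkewCell (lam mu : ℕ → ℕ) (i j : ℕ) : Prop := lam i ≤ j ∧ j < mu i

/-- The skew diagram `mu/lam` has at most one cell in each column. -/
def HorizStrip (lam mu : ℕ → ℕ) : Prop :=
  ∀ j i i', SkewCell lam mu i j → SkewCell lam mu i' j → i = i'

/-- The skew diagram `mu/lam` has at most one cell in each row. -/
def VertStrip (lam mu : ℕ → ℕ) : Prop := ∀ i, mu i ≤ lam i + 1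

/-- A superpartition of fermionic degree `m`: a strictly decreasing sequence `a` of
`m` nonnegative integers together with an ordinary partition `s` (a non-increasing
list of positive integers). -/
structure SuperPartition (m : ℕ) where
  a : Fin m → ℕ
  a_strictAnti : ∀ ⦃i j : Fin m⦄, i < j → a j < a i
  s : List ℕ
  s_sorted : s.Pairwise (· ≥ ·)
  s_pos : ∀ x ∈ s, 0 < x

/-- Sort a finite multiset of naturals into the non-increasing function it defines. -/
def sortFn (ms : Multiset ℕ) : ℕ → ℕ := fun i => (ms.sort (· ≥ ·)).getD i 0

/-- `Λ* = sort(Λᵃ ∪ Λˢ)`. -/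
def SuperPartition.starFn {m : ℕ} (Λ : SuperPartition m) : ℕ → ℕ :=
  sortFn ((List.ofFn Λ.a : Multiset ℕ) + (Λ.s : Multiset ℕ))

/-- `Λ^⊛ = sort((Λᵃ + 1ᵐ) ∪ Λˢ)`. -/
def SuperPartition.circFn {m : ℕ} (Λ : SuperPartition m) : ℕ → ℕ :=
  sortFn ((List.ofFn (fun i => Λ.a i + 1) : Multiset ℕ) + (Λ.s : Multiset ℕ))

def cnt (ms : Multiset ℕ) (t : ℕ) : ℕ := Multiset.countP (fun x => t < x) ms

lemma sort_coe_sorted (L : List ℕ) (hL : L.Pairwise (· ≥ ·)) :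
    (↑L : Multiset ℕ).sort (· ≥ ·) = L := by
  refine List.Perm.eq_of_pairwise' (Multiset.pairwise_sort _ _) hL ?_
  exact Multiset.coe_eq_coe.mp (Multiset.sort_eq _ _)

lemma sortFn_coe (L : List ℕ) (hL : L.Pairwise (· ≥ ·)) :
    sortFn (↑L) = fun i => L.getD i 0 := by
  unfold sortFn; rw [sort_coe_sorted L hL]

lemma sortFn_anti (ms : Multiset ℕ) : ∀ ⦃i j : ℕ⦄, i ≤ j → sortFn ms j ≤ sortFn ms i := by
  intro i j hij
  unfold sortFn
  set L := ms.sort (· ≥ ·) with hLdef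
  have hs : L.Pairwise (· ≥ ·) := Multiset.pairwise_sort _ _
  by_cases hj : j < L.length
  · have hi : i < L.length := lt_of_le_of_lt hij hj
    rw [List.getD_eq_getElem _ _ hj, List.getD_eq_getElem _ _ hi]
    rcases eq_or_lt_of_le hij with rfl | h
    · exact le_refl _
    · exact hs.rel_get_of_lt (a := ⟨i, hi⟩) (b := ⟨j, hj⟩) h
  · rw [List.getD_eq_default _ _ (le_of_not_gt hj)]
    exact Nat.zero_le _

lemma sortFn_eq_zero (ms : Multiset ℕ) {i : ℕ} (h : Multiset.card ms ≤ i) : sortFn ms i = 0 := by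
  unfold sortFn
  rw [List.getD_eq_default]
  rwa [Multiset.length_sort]


lemma list_lt_getD_iff (L : List ℕ) (hL : L.Pairwise (· ≥ ·)) (i t : ℕ) :
    t < L.getD i 0 ↔ i < (L.filter (fun x => decide (t < x))).length := by
  induction L generalizing i with
  | nil => simp
  | cons x xs ih =>
    rw [List.pairwise_cons] at hL
    by_cases htx : t < x
    · rw [List.filter_cons_of_pos (by simpa using htx)]
      cases i with
      | zero => simpa using htx
      | succ i =>
        rw [List.getD_cons_succ]
        rw [ih hL.2 i]
        simp [Nat.succ_lt_succ_iff]
    · have hnil : (xs.filter (fun x => decide (t < x))).length = 0 := by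
        rw [List.length_eq_zero_iff, List.filter_eq_nil_iff]
        intro y hy
        simp only [decide_eq_true_eq]
        exact fun hty => htx (lt_of_lt_of_le hty (hL.1 y hy))
      rw [List.filter_cons_of_neg (by simpa using htx), hnil]
      constructor
      · intro h
        exfalso
        cases i with
        | zero => exact htx (by simpa using h)
        | succ i =>
          rw [List.getD_cons_succ] at h
          have := (ih hL.2 i).mp h
          omega
      · omega

lemma lt_sortFn_iff (ms : Multiset ℕ) (i t : ℕ) :
    t < sortFn ms i ↔ i < cnt ms t := by
  have h1 := list_lt_getD_iff (ms.sort (· ≥ ·)) (Multiset.pairwise_sort _ _) i t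
  unfold sortFn cnt
  rw [h1]
  conv_rhs => rw [show ms = ↑(ms.sort (· ≥ ·)) from (Multiset.sort_eq _ _).symm]
  rw [Multiset.coe_countP, List.countP_eq_length_filter]

lemma cnt_eq_of_sortFn_eq {ms ms' : Multiset ℕ} (h : sortFn ms = sortFn ms') :
    cnt ms = cnt ms' := by
  funext t
  by_contra hne
  rcases Nat.lt_or_ge (cnt ms t) (cnt ms' t) with hlt | hge
  · have h1 : t < sortFn ms' (cnt ms t) := (lt_sortFn_iff _ _ _).mpr hlt
    rw [← h] at h1
    exact absurd ((lt_sortFn_iff _ _ _).mp h1) (lt_irrefl _)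
  · rcases lt_of_le_of_ne hge (fun e => hne e.symm) with hlt
    have h1 : t < sortFn ms (cnt ms' t) := (lt_sortFn_iff _ _ _).mpr hlt
    rw [h] at h1
    exact absurd ((lt_sortFn_iff _ _ _).mp h1) (lt_irrefl _)

lemma sortFn_mono_of_cnt_le {ms ms' : Multiset ℕ} (h : ∀ t, cnt ms t ≤ cnt ms' t) (i : ℕ) :
    sortFn ms i ≤ sortFn ms' i := by
  by_contra h'
  push_neg at h'
  have h1 : i < cnt ms (sortFn ms' i) := (lt_sortFn_iff _ _ _).mp h'
  have h2 : sortFn ms' i < sortFn ms' i :=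
    (lt_sortFn_iff _ _ _).mpr (lt_of_lt_of_le h1 (h _))
  exact absurd h2 (lt_irrefl _)

lemma cnt_add (ms ms' : Multiset ℕ) (t : ℕ) : cnt (ms + ms') t = cnt ms t + cnt ms' t :=
  Multiset.countP_add _ _ _

lemma cnt_anti (ms : Multiset ℕ) {t u : ℕ} (h : t ≤ u) : cnt ms u ≤ cnt ms t := by
  unfold cnt
  rw [Multiset.countP_eq_card_filter, Multiset.countP_eq_card_filter]
  exact Multiset.card_le_card (Multiset.monotone_filter_right _ (fun x hx => lt_of_le_of_lt h hx))

lemma count_succ_add_cnt (ms : Multiset ℕ) (t : ℕ) :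
    ms.count (t + 1) + cnt ms (t + 1) = cnt ms t := by
  induction ms using Multiset.induction with
  | empty => simp [cnt]
  | cons x s ih =>
    simp only [cnt, Multiset.count_cons, Multiset.countP_cons] at *
    split_ifs <;> omega

/-- number of entries `≥ t` -/
def cge (ms : Multiset ℕ) (t : ℕ) : ℕ := Multiset.countP (fun x => t ≤ x) ms

lemma cge_succ (ms : Multiset ℕ) (t : ℕ) : cge ms (t + 1) = cnt ms t := by
  unfold cge cnt
  apply Multiset.countP_congr rfl
  intro x _
  simp [Nat.succ_le_iff]

lemma cge_eq_cnt_add_count (ms : Multiset ℕ) (t : ℕ) :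
    cge ms t = cnt ms t + ms.count t := by
  induction ms using Multiset.induction with
  | empty => simp [cge, cnt]
  | cons x s ih =>
    simp only [cge, cnt, Multiset.count_cons, Multiset.countP_cons] at *
    split_ifs <;> omega

lemma cnt_map_succ (ms : Multiset ℕ) (t : ℕ) :
    cnt (ms.map (· + 1)) t = cge ms t := by
  unfold cnt cge
  rw [Multiset.countP_map]
  rw [Multiset.countP_eq_card_filter]
  congr 1
  apply Multiset.filter_congr
  intro x _
  simp [Nat.lt_succ_iff]

lemma list_sum_getD (L : List ℕ) : ∀ N, L.length ≤ N →
    ∑ i ∈ Finset.range N, L.getD i 0 = L.sum := by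
  induction L with
  | nil => intro N _; simp
  | cons x xs ih =>
    intro N hN
    cases N with
    | zero => simp at hN
    | succ N' =>
      rw [Finset.sum_range_succ']
      simp only [List.getD_cons_succ, List.getD_cons_zero, List.sum_cons]
      rw [ih N' (by simpa using hN)]
      omega

lemma sum_range_sortFn (ms : Multiset ℕ) {N : ℕ} (h : Multiset.card ms ≤ N) :
    ∑ i ∈ Finset.range N, sortFn ms i = ms.sum := by
  unfold sortFn
  rw [list_sum_getD _ N (by rwa [Multiset.length_sort])]
  conv_rhs => rw [show ms = ↑(ms.sort (· ≥ ·)) from (Multiset.sort_eq _ _).symm]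
  rfl

lemma getD_replicate_zero (k i : ℕ) : (List.replicate k 0).getD i 0 = 0 := by
  by_cases h : i < k
  · rw [List.getD_eq_getElem _ _ (by simpa using h)]
    simp
  · rw [List.getD_eq_default]
    simp only [List.length_replicate]
    omega

lemma sortFn_add_zeros (ms z : Multiset ℕ) (hz : ∀ x ∈ z, x = 0) :
    sortFn (ms + z) = sortFn ms := by
  have hrep : z = Multiset.replicate (Multiset.card z) 0 := by
    rwa [Multiset.eq_replicate_card]
  set k := Multiset.card z
  set L := ms.sort (· ≥ ·) with hL
  have hsL : L.Pairwise (· ≥ ·) := Multiset.pairwise_sort _ _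
  have hsort : (ms + z).sort (· ≥ ·) = L ++ List.replicate k 0 := by
    refine List.Perm.eq_of_pairwise' (Multiset.pairwise_sort _ _) ?_ ?_
    swap
    · rw [← Multiset.coe_eq_coe, Multiset.sort_eq, ← Multiset.coe_add,
        Multiset.coe_replicate, ← hrep, Multiset.sort_eq]
    · refine List.pairwise_append.mpr ⟨hsL, ?_, ?_⟩
      · induction k with
        | zero => simp
        | succ k ihk =>
          rw [List.replicate_succ, List.pairwise_cons]
          exact ⟨fun y hy => by rw [List.eq_of_mem_replicate hy], ihk⟩
      · intro x _ y hy
        rw [List.eq_of_mem_replicate hy]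
        exact Nat.zero_le x
  funext i
  unfold sortFn
  rw [hsort]
  by_cases hi : i < L.length
  · rw [List.getD_append _ _ _ _ hi]
  · rw [List.getD_eq_default _ _ (le_of_not_gt hi),
      List.getD_append_right _ _ _ _ (le_of_not_gt hi)]
    exact getD_replicate_zero _ _

lemma sortFn_map_range (h : ℕ → ℕ) (K : ℕ)
    (hanti : ∀ ⦃i j : ℕ⦄, i ≤ j → h j ≤ h i) (hzero : ∀ i, K ≤ i → h i = 0) :
    sortFn (↑((List.range K).map h)) = h := by
  have hs : ((List.range K).map h).Pairwise (· ≥ ·) := by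
    rw [List.pairwise_map]
    exact (List.pairwise_lt_range (n := K)).imp (fun hij => hanti (le_of_lt hij))
  rw [sortFn_coe _ hs]
  funext i
  by_cases hi : i < K
  · rw [List.getD_eq_getElem _ _ (by simpa using hi)]
    simp
  · rw [List.getD_eq_default _ _ (by simpa using hi)]
    exact (hzero i (le_of_not_gt hi)).symm


section StripLemmas

lemma horizStrip_of_border {lam mu : ℕ → ℕ}
    (hmu : ∀ ⦃i j : ℕ⦄, i ≤ j → mu j ≤ mu i)
    (h : ∀ i, mu (i + 1) ≤ lam i) : HorizStrip lam mu := by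
  have aux : ∀ i i' j, i < i' → SkewCell lam mu i j → SkewCell lam mu i' j → False := by
    rintro i i' j hii ⟨h1, h2⟩ ⟨h3, h4⟩
    have : mu i' ≤ lam i := le_trans (hmu (Nat.succ_le_of_lt hii)) (h i)
    omega
  intro j i i' c c'
  rcases lt_trichotomy i i' with hlt | heq | hgt
  · exact absurd (aux i i' j hlt c c') not_false
  · exact heq
  · exact absurd (aux i' i j hgt c' c) not_false

lemma border_of_horizStrip {lam mu : ℕ → ℕ}
    (hlam : ∀ ⦃i j : ℕ⦄, i ≤ j → lam j ≤ lam i)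
    (hmu : ∀ ⦃i j : ℕ⦄, i ≤ j → mu j ≤ mu i)
    (h : HorizStrip lam mu) (i : ℕ) : mu (i + 1) ≤ lam i := by
  by_contra h'
  push_neg at h'
  have c1 : SkewCell lam mu i (lam i) :=
    ⟨le_refl _, lt_of_lt_of_le h' (hmu (Nat.le_succ i))⟩
  have c2 : SkewCell lam mu (i + 1) (lam i) := ⟨hlam (Nat.le_succ i), h'⟩
  exact absurd (h (lam i) i (i + 1) c1 c2) (by omega)

end StripLemmas

section ForwardLemmas

variable {m : ℕ} (Λ : SuperPartition m)

/-- the multiset of `Λᵃ` entries -/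
def aMS : Multiset ℕ := (List.ofFn Λ.a : Multiset ℕ)
/-- the multiset of `Λˢ` entries -/
def sMS : Multiset ℕ := (Λ.s : Multiset ℕ)

lemma starFn_eq : Λ.starFn = sortFn (aMS Λ + sMS Λ) := rfl

lemma circFn_eq : Λ.circFn = sortFn ((aMS Λ).map (· + 1) + sMS Λ) := by
  unfold SuperPartition.circFn aMS sMS
  congr 1
  rw [Multiset.map_coe, List.map_ofFn]
  rfl

lemma aMS_nodup : (aMS Λ).Nodup := by
  rw [aMS, Multiset.coe_nodup, List.nodup_ofFn]
  intro i j hij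
  by_contra hne
  rcases lt_or_gt_of_ne hne with h | h
  · exact absurd hij (ne_of_gt (Λ.a_strictAnti h))
  · exact absurd hij.symm (ne_of_gt (Λ.a_strictAnti h))

lemma count_aMS_le_one (t : ℕ) : (aMS Λ).count t ≤ 1 :=
  (Multiset.nodup_iff_count_le_one.mp (aMS_nodup Λ)) t

lemma count_sMS_zero : (sMS Λ).count 0 = 0 := by
  rw [Multiset.count_eq_zero]
  intro h
  exact absurd (Λ.s_pos 0 (by simpa [sMS] using h)) (lt_irrefl 0)

lemma card_aMS : Multiset.card (aMS Λ) = m := by simp [aMS]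

/-- `f t` = number of entries of `Λ*` greater than `t` -/
lemma cnt_star (t : ℕ) : cnt (aMS Λ + sMS Λ) t = cnt (aMS Λ) t + cnt (sMS Λ) t :=
  cnt_add _ _ _

lemma cnt_circ (t : ℕ) :
    cnt ((aMS Λ).map (· + 1) + sMS Λ) t = cge (aMS Λ) t + cnt (sMS Λ) t := by
  rw [cnt_add, cnt_map_succ]

end ForwardLemmas


lemma sum_map_succ (s : Multiset ℕ) : (s.map (· + 1)).sum = s.sum + Multiset.card s := by
  induction s using Multiset.induction with
  | empty => simp
  | cons x s ih =>
    simp only [Multiset.map_cons, Multiset.sum_cons, Multiset.card_cons, ih]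
    omega

section MapsTo

variable {m : ℕ} (Λ : SuperPartition m)

lemma key_f_le_g (t : ℕ) :
    cnt (aMS Λ + sMS Λ) t ≤ cnt ((aMS Λ).map (· + 1) + sMS Λ) t := by
  rw [cnt_star, cnt_circ]
  have : cnt (aMS Λ) t ≤ cge (aMS Λ) t := by
    rw [cge_eq_cnt_add_count]; omega
  omega

lemma key_g_le_f_succ (t : ℕ) :
    cnt ((aMS Λ).map (· + 1) + sMS Λ) t ≤ cnt (aMS Λ + sMS Λ) t + 1 := by
  rw [cnt_star, cnt_circ, cge_eq_cnt_add_count]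
  have := count_aMS_le_one Λ t
  omega

lemma key_g_succ_le_f (t : ℕ) :
    cnt ((aMS Λ).map (· + 1) + sMS Λ) (t + 1) ≤ cnt (aMS Λ + sMS Λ) t := by
  rw [cnt_star, cnt_circ, cge_succ]
  have : cnt (sMS Λ) (t + 1) ≤ cnt (sMS Λ) t := cnt_anti _ (Nat.le_succ t)
  omega

lemma star_le_circ (i : ℕ) : Λ.starFn i ≤ Λ.circFn i := by
  rw [starFn_eq, circFn_eq]
  exact sortFn_mono_of_cnt_le (key_f_le_g Λ) i

lemma vertStrip_star_circ : VertStrip Λ.starFn Λ.circFn := by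
  intro i
  by_contra h
  push_neg at h
  rw [starFn_eq, circFn_eq] at h
  have h1 : Λ.starFn i + 1 < sortFn ((aMS Λ).map (· + 1) + sMS Λ) i := h
  have h2 : i < cnt ((aMS Λ).map (· + 1) + sMS Λ) (Λ.starFn i + 1) :=
    (lt_sortFn_iff _ _ _).mp h1
  have h3 : i < cnt (aMS Λ + sMS Λ) (Λ.starFn i) :=
    lt_of_lt_of_le h2 (key_g_succ_le_f Λ _)
  have h4 : Λ.starFn i < Λ.starFn i := (lt_sortFn_iff _ _ _).mpr h3
  exact absurd h4 (lt_irrefl _)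

lemma border_star_circ (i : ℕ) : Λ.circFn (i + 1) ≤ Λ.starFn i := by
  by_contra h
  push_neg at h
  have h2 : i + 1 < cnt ((aMS Λ).map (· + 1) + sMS Λ) (Λ.starFn i) := by
    rw [circFn_eq] at h
    exact (lt_sortFn_iff _ _ _).mp h
  have h3 : i < cnt (aMS Λ + sMS Λ) (Λ.starFn i) := by
    have := key_g_le_f_succ Λ (Λ.starFn i)
    omega
  have h4 : Λ.starFn i < Λ.starFn i := by
    conv_rhs => rw [starFn_eq]
    exact (lt_sortFn_iff _ _ _).mpr h3
  exact absurd h4 (lt_irrefl _)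

lemma isPartitionFn_star : IsPartitionFn Λ.starFn := by
  rw [starFn_eq]
  exact ⟨fun i j h => sortFn_anti _ h,
    ⟨Multiset.card (aMS Λ + sMS Λ), fun i hi => sortFn_eq_zero _ hi⟩⟩

lemma isPartitionFn_circ : IsPartitionFn Λ.circFn := by
  rw [circFn_eq]
  exact ⟨fun i j h => sortFn_anti _ h,
    ⟨Multiset.card ((aMS Λ).map (· + 1) + sMS Λ), fun i hi => sortFn_eq_zero _ hi⟩⟩

lemma horizStrip_star_circ : HorizStrip Λ.starFn Λ.circFn :=
  horizStrip_of_border (isPartitionFn_circ Λ).1 (border_star_circ Λ)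

lemma sum_star_circ : (∑ᶠ i, (Λ.circFn i - Λ.starFn i)) = m := by
  set N := m + Λ.s.length with hN
  have hcard1 : Multiset.card (aMS Λ + sMS Λ) = N := by
    simp [aMS, sMS, hN]
  have hcard2 : Multiset.card ((aMS Λ).map (· + 1) + sMS Λ) = N := by
    simp [aMS, sMS, hN]
  have hsupp : Function.support (fun i => Λ.circFn i - Λ.starFn i) ⊆ ↑(Finset.range N) := by
    intro i hi
    simp only [Function.mem_support] at hi
    simp only [Finset.coe_range, Set.mem_Iio]
    by_contra hiN
    push_neg at hiN
    have h1 : Λ.circFn i = 0 := by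
      rw [circFn_eq]; exact sortFn_eq_zero _ (hcard2 ▸ hiN)
    omega
  rw [finsum_eq_sum_of_support_subset _ hsupp]
  rw [Finset.sum_tsub_distrib _ (fun i _ => star_le_circ Λ i)]
  rw [starFn_eq, circFn_eq, sum_range_sortFn _ (le_of_eq hcard1),
    sum_range_sortFn _ (le_of_eq hcard2)]
  rw [Multiset.sum_add, Multiset.sum_add, sum_map_succ, card_aMS]
  omega

end MapsTo


section Injectivity

lemma count_eq_of_sortFn_eq' {ms ms' : Multiset ℕ} (h : sortFn ms = sortFn ms') (t : ℕ) :
    ms.count (t + 1) = ms'.count (t + 1) := by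
  have hc := cnt_eq_of_sortFn_eq h
  have h1 := count_succ_add_cnt ms t
  have h2 := count_succ_add_cnt ms' t
  rw [funext_iff] at hc
  have e1 := hc t
  have e2 := hc (t + 1)
  omega

lemma count_succ_map_succ (s : Multiset ℕ) (t : ℕ) :
    (s.map (· + 1)).count (t + 1) = s.count t := by
  have := Multiset.count_map_eq_count' (fun x => x + 1) s (fun a b h => by simpa using h) t
  simpa using this

lemma superPartition_ext {m : ℕ} {Λ Λ' : SuperPartition m}
    (ha : Λ.a = Λ'.a) (hs : Λ.s = Λ'.s) : Λ = Λ' := by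
  cases Λ
  cases Λ'
  dsimp only at ha hs
  cases ha
  cases hs
  rfl

lemma superPartition_inj {m : ℕ} (Λ Λ' : SuperPartition m)
    (hstar : Λ.starFn = Λ'.starFn) (hcirc : Λ.circFn = Λ'.circFn) : Λ = Λ' := by
  rw [starFn_eq, starFn_eq] at hstar
  rw [circFn_eq, circFn_eq] at hcirc
  have h1 : ∀ t, (aMS Λ).count (t + 1) + (sMS Λ).count (t + 1)
      = (aMS Λ').count (t + 1) + (sMS Λ').count (t + 1) := by
    intro t
    have := count_eq_of_sortFn_eq' hstar t
    simpa [Multiset.count_add] using this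
  have h2 : ∀ t, (aMS Λ).count t + (sMS Λ).count (t + 1)
      = (aMS Λ').count t + (sMS Λ').count (t + 1) := by
    intro t
    have := count_eq_of_sortFn_eq' hcirc t
    rw [Multiset.count_add, Multiset.count_add, count_succ_map_succ, count_succ_map_succ] at this
    exact this
  have hstep : ∀ t, ((aMS Λ).count t : ℤ) - ((aMS Λ').count t : ℤ)
      = ((aMS Λ).count (t + 1) : ℤ) - ((aMS Λ').count (t + 1) : ℤ) := by
    intro t
    have e1 := h1 t
    have e2 := h2 t
    omega
  have hiter : ∀ t k, ((aMS Λ).count t : ℤ) - ((aMS Λ').count t : ℤ)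
      = ((aMS Λ).count (t + k) : ℤ) - ((aMS Λ').count (t + k) : ℤ) := by
    intro t k
    induction k with
    | zero => rfl
    | succ k ih =>
      rw [ih, show t + (k + 1) = (t + k) + 1 from rfl]
      exact hstep (t + k)
  have hnotmem : ∀ (s : Multiset ℕ) (t : ℕ), s.sum < t → s.count t = 0 := by
    intro s t hst
    rw [Multiset.count_eq_zero]
    intro hmem
    have := Multiset.single_le_sum (fun x _ => Nat.zero_le x) t hmem
    omega
  have hzero : ∀ t, (aMS Λ).count t = (aMS Λ').count t := by
    intro t
    set T := (aMS Λ).sum + (aMS Λ').sum + 1 with hT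
    have hit := hiter t T
    have hA : (aMS Λ).count (t + T) = 0 := hnotmem _ _ (by omega)
    have hA' : (aMS Λ').count (t + T) = 0 := hnotmem _ _ (by omega)
    omega
  have hAeq : aMS Λ = aMS Λ' := Multiset.ext.mpr hzero
  have hSeq : sMS Λ = sMS Λ' := by
    refine Multiset.ext.mpr (fun t => ?_)
    cases t with
    | zero => rw [count_sMS_zero, count_sMS_zero]
    | succ t =>
      have := h1 t
      have := hzero (t + 1)
      omega
  have hgt_antisymm : IsAntisymm ℕ (· > ·) :=
    ⟨fun a b h1' h2' => absurd h1' (not_lt_of_gt h2')⟩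
  have hge_antisymm : IsAntisymm ℕ (· ≥ ·) :=
    ⟨fun a b h1' h2' => le_antisymm h2' h1'⟩
  have ha : Λ.a = Λ'.a := by
    apply List.ofFn_injective
    refine List.Perm.eq_of_pairwise (le := (· > ·))
      (fun a b _ _ h1' h2' => absurd h1' (not_lt_of_gt h2')) ?_ ?_ (Multiset.coe_eq_coe.mp hAeq)
    · exact List.pairwise_ofFn.mpr (fun i j hij => Λ.a_strictAnti hij)
    · exact List.pairwise_ofFn.mpr (fun i j hij => Λ'.a_strictAnti hij)
  have hs : Λ.s = Λ'.s :=
    List.Perm.eq_of_pairwise (le := (· ≥ ·))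
      (fun a b _ _ h1' h2' => le_antisymm h2' h1') Λ.s_sorted Λ'.s_sorted (Multiset.coe_eq_coe.mp hSeq)
  exact superPartition_ext ha hs

end Injectivity


section Surjectivity

lemma sortFn_filter_map (h : ℕ → ℕ) (N : ℕ) (p : ℕ → Prop) [DecidablePred p]
    (hanti : ∀ ⦃i j : ℕ⦄, i ≤ j → h j ≤ h i) (hzN : ∀ i, N ≤ i → h i = 0)
    (hz : ∀ i, i < N → ¬ p i → h i = 0) :
    sortFn (Multiset.map h (Multiset.filter p ↑(List.range N))) = h := by
  have hsplit : Multiset.map h ↑(List.range N)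
      = Multiset.map h (Multiset.filter p ↑(List.range N))
        + Multiset.map h (Multiset.filter (fun i => ¬ p i) ↑(List.range N)) := by
    rw [← Multiset.map_add, Multiset.filter_add_not]
  have hzero : ∀ x ∈ Multiset.map h (Multiset.filter (fun i => ¬ p i) ↑(List.range N)),
      x = 0 := by
    intro x hx
    rcases Multiset.mem_map.mp hx with ⟨i, hi, rfl⟩
    rcases Multiset.mem_filter.mp hi with ⟨hir, hnp⟩
    have hiN : i < N := by
      rw [Multiset.mem_coe, List.mem_range] at hir
      exact hir
    exact hz i hiN hnp
  calc sortFn (Multiset.map h (Multiset.filter p ↑(List.range N)))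
      = sortFn (Multiset.map h (Multiset.filter p ↑(List.range N))
          + Multiset.map h (Multiset.filter (fun i => ¬ p i) ↑(List.range N))) :=
        (sortFn_add_zeros _ _ hzero).symm
    _ = sortFn (Multiset.map h ↑(List.range N)) := by rw [← hsplit]
    _ = h := by
        rw [Multiset.map_coe]
        exact sortFn_map_range h N hanti hzN

end Surjectivity


lemma surj_aux {m : ℕ} (lam mu : ℕ → ℕ) (hl : IsPartitionFn lam) (hm : IsPartitionFn mu)
    (hle : ∀ i, lam i ≤ mu i) (hh : HorizStrip lam mu) (hv : VertStrip lam mu)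
    (hsum : (∑ᶠ i, (mu i - lam i)) = m) :
    ∃ Λ : SuperPartition m, Λ.starFn = lam ∧ Λ.circFn = mu := by
  obtain ⟨N, hN⟩ := hm.2
  have hlamN : ∀ i, N ≤ i → lam i = 0 := by
    intro i hi
    have := hN i hi
    have := hle i
    omega
  have hborder : ∀ i, mu (i + 1) ≤ lam i := border_of_horizStrip hl.1 hm.1 hh
  have hdec : ∀ r r', r < r' → lam r < mu r → lam r' < mu r' → lam r' < lam r := by
    intro r r' hrr h1 h2
    have h3 : mu r' ≤ mu (r + 1) := hm.1 (Nat.succ_le_of_lt hrr)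
    have := hborder r
    omega
  set T : List ℕ := (List.range N).filter (fun i => decide (lam i < mu i)) with hT
  have hTmem : ∀ i ∈ T, i < N ∧ lam i < mu i := by
    intro i hi
    rcases List.mem_filter.mp hi with ⟨h1, h2⟩
    exact ⟨List.mem_range.mp h1, of_decide_eq_true h2⟩
  have hTsorted : T.Pairwise (· < ·) := (List.pairwise_lt_range (n := N)).filter _
  have hsupp : Function.support (fun i => mu i - lam i) ⊆ ↑(Finset.range N) := by
    intro i hi
    simp only [Function.mem_support] at hi
    simp only [Finset.coe_range, Set.mem_Iio]
    by_contra hiN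
    push_neg at hiN
    have := hN i hiN
    have := hle i
    omega
  have hTlen : T.length = m := by
    rw [← hsum, finsum_eq_sum_of_support_subset _ hsupp]
    have hcongr : ∀ i ∈ Finset.range N, mu i - lam i = if lam i < mu i then 1 else 0 := by
      intro i _
      have := hv i
      have := hle i
      split_ifs <;> omega
    rw [Finset.sum_congr rfl hcongr, Finset.sum_boole]
    rw [Nat.cast_id, Finset.card_def, Finset.filter_val, Finset.range_val,
      ← Multiset.coe_range, Multiset.filter_coe, Multiset.coe_card]
  set av : Fin m → ℕ := fun k => lam (T.getD (k : ℕ) 0) with hav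
  have hstripk : ∀ k : ℕ, ∀ h2 : k < T.length, lam (T[k]'h2) < mu (T[k]'h2) := by
    intro k h2
    exact (hTmem _ (List.getElem_mem _)).2
  have havanti : ∀ ⦃i j : Fin m⦄, i < j → av j < av i := by
    intro i j hij
    have hi' : (i : ℕ) < T.length := by rw [hTlen]; exact i.isLt
    have hj' : (j : ℕ) < T.length := by rw [hTlen]; exact j.isLt
    have hTij : T.getD (i : ℕ) 0 < T.getD (j : ℕ) 0 := by
      rw [List.getD_eq_getElem _ _ hi', List.getD_eq_getElem _ _ hj']
      exact List.pairwise_iff_get.mp hTsorted ⟨i, hi'⟩ ⟨j, hj'⟩ hij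
    simp only [hav]
    rw [List.getD_eq_getElem _ _ hi', List.getD_eq_getElem _ _ hj'] at *
    exact hdec _ _ hTij (hstripk _ hi') (hstripk _ hj')
  set Q : List ℕ := (List.range N).filter (fun i => decide (¬ lam i < mu i ∧ 0 < lam i)) with hQ
  have hQmem : ∀ i ∈ Q, i < N ∧ ¬ lam i < mu i ∧ 0 < lam i := by
    intro i hi
    rcases List.mem_filter.mp hi with ⟨h1, h2⟩
    exact ⟨List.mem_range.mp h1, of_decide_eq_true h2⟩
  set sv : List ℕ := Q.map lam with hsv
  have hsvsorted : sv.Pairwise (· ≥ ·) := by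
    rw [hsv, List.pairwise_map]
    exact ((List.pairwise_lt_range (n := N)).filter _).imp (fun hab => hl.1 (le_of_lt hab))
  have hsvpos : ∀ x ∈ sv, 0 < x := by
    intro x hx
    rcases List.mem_map.mp hx with ⟨i, hi, rfl⟩
    exact (hQmem i hi).2.2
  -- the combined multiset identity
  have hMS : ∀ f : ℕ → ℕ, (↑(T.map f) + ↑(Q.map f) : Multiset ℕ)
      = Multiset.map f (Multiset.filter
          (fun i => lam i < mu i ∨ (¬ lam i < mu i ∧ 0 < lam i)) ↑(List.range N)) := by
    intro f
    rw [← Multiset.map_coe, ← Multiset.map_coe, ← Multiset.map_add]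
    congr 1
    rw [hT, hQ, ← Multiset.filter_coe (fun i => lam i < mu i),
      ← Multiset.filter_coe (fun i => ¬ lam i < mu i ∧ 0 < lam i),
      Multiset.filter_add_filter]
    have h0 : Multiset.filter
        (fun i => (lam i < mu i) ∧ (¬ lam i < mu i ∧ 0 < lam i))
        (↑(List.range N) : Multiset ℕ) = 0 := by
      rw [Multiset.filter_eq_nil]
      rintro a _ ⟨c1, c2, _⟩
      exact c2 c1
    rw [h0, add_zero]
  refine ⟨⟨av, havanti, sv, hsvsorted, hsvpos⟩, ?_, ?_⟩
  · -- starFn = lam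
    show sortFn (↑(List.ofFn av) + ↑sv) = lam
    have hofFn : (List.ofFn av) = T.map lam := by
      apply List.ext_getElem
      · rw [List.length_ofFn, List.length_map, hTlen]
      · intro i h1 h2
        rw [List.getElem_ofFn, List.getElem_map]
        simp only [hav]
        congr 1
        exact List.getD_eq_getElem _ _ _
    rw [hofFn, hsv, hMS lam]
    apply sortFn_filter_map lam N _ hl.1 hlamN
    intro i _ hnp
    by_contra hlz
    exact hnp (Or.inr ⟨fun hc => hnp (Or.inl hc), Nat.pos_of_ne_zero hlz⟩)
  · -- circFn = mu
    show sortFn (↑(List.ofFn (fun k => av k + 1)) + ↑sv) = mu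
    have hofFn : (List.ofFn (fun k => av k + 1)) = T.map mu := by
      apply List.ext_getElem
      · rw [List.length_ofFn, List.length_map, hTlen]
      · intro i h1 h2
        have h2' : i < T.length := by simpa using h2
        rw [List.getElem_ofFn, List.getElem_map]
        simp only [hav]
        rw [List.getD_eq_getElem _ _ h2']
        have hPT := hstripk i h2'
        have := hv (T[i]'h2')
        omega
    have hsvmu : (↑sv : Multiset ℕ) = ↑(Q.map mu) := by
      rw [hsv]
      congr 1
      apply List.map_congr_left
      intro i hi
      rcases hQmem i hi with ⟨_, hnlt, _⟩
      have := hle i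
      omega
    rw [hofFn, hsvmu, hMS mu]
    apply sortFn_filter_map mu N _ hm.1 hN
    intro i _ hnp
    have h1 : ¬ lam i < mu i := fun hc => hnp (Or.inl hc)
    have h2 : lam i = 0 := by
      by_contra hlz
      exact hnp (Or.inr ⟨h1, Nat.pos_of_ne_zero hlz⟩)
    have := hle i
    omega


/-- the map `Λ ↦ (Λ*, Λ^⊛)` is a bijection from superpartitions of
fermionic degree `m` onto the pairs of partitions `(λ, μ)` with `λ ⊆ μ` such that
`μ/λ` is both a horizontal and a vertical strip, of total size `m`. -/
theorem stmt0 (m : ℕ) :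
    Set.BijOn (fun Λ : SuperPartition m => (Λ.starFn, Λ.circFn)) Set.univ
      {p : (ℕ → ℕ) × (ℕ → ℕ) |
        IsPartitionFn p.1 ∧ IsPartitionFn p.2 ∧ (∀ i, p.1 i ≤ p.2 i) ∧
        HorizStrip p.1 p.2 ∧ VertStrip p.1 p.2 ∧ (∑ᶠ i, (p.2 i - p.1 i)) = m} := by
  refine ⟨?_, ?_, ?_⟩
  · intro Λ _
    exact ⟨isPartitionFn_star Λ, isPartitionFn_circ Λ, star_le_circ Λ,
      horizStrip_star_circ Λ, vertStrip_star_circ Λ, sum_star_circ Λ⟩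
  · intro Λ _ Λ' _ h
    exact superPartition_inj Λ Λ' (congrArg Prod.fst h) (congrArg Prod.snd h)
  · intro p hp
    obtain ⟨h1, h2, h3, h4, h5, h6⟩ := hp
    obtain ⟨Λ, hs, hc⟩ := surj_aux p.1 p.2 h1 h2 h3 h4 h5 h6
    exact ⟨Λ, Set.mem_univ _, Prod.ext hs hc⟩
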